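/- Let r, s ≥ 0 and let k_s(x) = Σ_{j=0}^{s} λ_j x^{s−j} and k_r(x) = Σ_{j=0}^{r} μ_j x^{r−j} be monic polynomials (λ₀ = μ₀ = 1) over a commutative ring, with formal derivatives k_s′, k_r′, and let k_{s+r} = k_s·k_r. Then in the polynomial ring in two variables t, u: k_{s+r}(t) − k_{s+r}(u) − (t − u)·( k_s′(u)·k_r(u) + k_s(t)·k_r′(t) ) = (t − u)² · [ Σ_{j=0}^{s−2} Σ_{i=0}^{s−j−2} Σ_{k=0}^{r} (i+1) λ_j μ_{r−k} t^{s−j−i−2} u^{i+k} − Σ_{j=0}^{r−2} Σ_{i=0}^{r−j−2} Σ_{k=0}^{s} (i+1) μ_j λ_{s−k} u^{r−j−i−2} t^{i+k} ]. -/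
import Mathlib

lemma key13 {S : Type*} [CommRing S] (t u : S) : ∀ n : ℕ,
    t ^ n - u ^ n - (n : S) * ((t - u) * u ^ (n - 1)) =
      (t - u) ^ 2 * ∑ i ∈ Finset.range (n - 1), ((i + 1 : ℕ) : S) * t ^ (n - 2 - i) * u ^ i := by
  intro n
  induction n with
  | zero => simp
  | succ n ih =>
    rcases n with _ | m
    · simp
    · have hsum : ∑ i ∈ Finset.range (m + 1 + 1 - 1), ((i + 1 : ℕ) : S) * t ^ (m + 1 + 1 - 2 - i) * u ^ i
          = t * (∑ i ∈ Finset.range m, ((i + 1 : ℕ) : S) * t ^ (m + 1 - 2 - i) * u ^ i)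
            + ((m + 1 : ℕ) : S) * u ^ m := by
        rw [show m + 1 + 1 - 1 = m + 1 by omega, Finset.sum_range_succ, Finset.mul_sum]
        congr 1
        · apply Finset.sum_congr rfl
          intro i hi
          simp only [Finset.mem_range] at hi
          rw [show m + 1 + 1 - 2 - i = (m + 1 - 2 - i) + 1 by omega]
          ring
        · rw [show m + 1 + 1 - 2 - m = 0 by omega]
          push_cast; ring
      rw [hsum]
      have ht : t ^ (m + 1 + 1) = t * t ^ (m + 1) := by ring
      have hu1 : u ^ (m + 1 + 1) = u * u ^ (m + 1) := by ring
      have hu2 : u ^ (m + 1) = u * u ^ m := by ring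
      have ihm : t ^ (m + 1) = (t - u) ^ 2 * ∑ i ∈ Finset.range m, ((i + 1 : ℕ) : S) * t ^ (m + 1 - 2 - i) * u ^ i
          + ((m + 1 : ℕ) : S) * ((t - u) * u ^ m) + u ^ (m + 1) := by
        rw [show (m+1) - 1 = m from rfl] at ih
        push_cast at ih ⊢
        linear_combination ih
      rw [ht, ihm]
      push_cast
      rw [hu1, hu2]
      ring

lemma polykey13 {R S : Type*} [CommRing R] [CommRing S] [Algebra R S] (t u : S)
    (s : ℕ) (lam : ℕ → R) :
    Polynomial.aeval t (∑ j ∈ Finset.range (s+1), Polynomial.C (lam j) * Polynomial.X ^ (s - j))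
      - Polynomial.aeval u (∑ j ∈ Finset.range (s+1), Polynomial.C (lam j) * Polynomial.X ^ (s - j))
      - (t - u) * Polynomial.aeval u (Polynomial.derivative
          (∑ j ∈ Finset.range (s+1), Polynomial.C (lam j) * Polynomial.X ^ (s - j))) =
    (t - u) ^ 2 * ∑ j ∈ Finset.range (s-1), algebraMap R S (lam j) *
        ∑ i ∈ Finset.range (s-j-1), ((i + 1 : ℕ) : S) * t ^ (s-j-2-i) * u ^ i := by
  simp only [map_sum, Polynomial.derivative_sum, Polynomial.derivative_C_mul,
    Polynomial.derivative_X_pow, map_mul, Polynomial.aeval_C, map_pow, Polynomial.aeval_X,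
    map_natCast]
  rw [Finset.mul_sum, ← Finset.sum_sub_distrib, ← Finset.sum_sub_distrib]
  have main : ∀ j ∈ Finset.range (s+1),
      algebraMap R S (lam j) * t ^ (s - j) - algebraMap R S (lam j) * u ^ (s - j)
        - (t - u) * (algebraMap R S (lam j) * (((s - j : ℕ) : S) * u ^ (s - j - 1)))
      = (t - u) ^ 2 * (algebraMap R S (lam j) *
          ∑ i ∈ Finset.range (s-j-1), ((i + 1 : ℕ) : S) * t ^ (s-j-2-i) * u ^ i) := by
    intro j _
    have := key13 t u (s - j)
    calc algebraMap R S (lam j) * t ^ (s - j) - algebraMap R S (lam j) * u ^ (s - j)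
        - (t - u) * (algebraMap R S (lam j) * (((s - j : ℕ) : S) * u ^ (s - j - 1)))
        = algebraMap R S (lam j) * (t ^ (s-j) - u ^ (s-j)
            - ((s-j : ℕ) : S) * ((t - u) * u ^ (s - j - 1))) := by ring
      _ = _ := by rw [this]; ring
  rw [Finset.sum_congr rfl main, Finset.mul_sum]
  rw [← Finset.sum_subset (Finset.range_subset_range.2 (by omega : s - 1 ≤ s + 1))]
  intro j hj hj2
  simp only [Finset.mem_range] at hj hj2
  rw [show s - j - 1 = 0 by omega]
  simp

lemma triple13 {R S : Type*} [CommRing R] [CommRing S] [Algebra R S] (t u : S)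
    (s r : ℕ) (lam mu : ℕ → R) :
    (∑ j ∈ Finset.range (s-1), ∑ i ∈ Finset.range (s-j-1), ∑ k ∈ Finset.range (r+1),
        ((i + 1 : ℕ) : S) * algebraMap R S (lam j) * algebraMap R S (mu (r-k))
          * t ^ (s-j-i-2) * u ^ (i+k))
    = (∑ k ∈ Finset.range (r+1), algebraMap R S (mu k) * u ^ (r-k)) *
        ∑ j ∈ Finset.range (s-1), algebraMap R S (lam j) *
          ∑ i ∈ Finset.range (s-j-1), ((i + 1 : ℕ) : S) * t ^ (s-j-2-i) * u ^ i := by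
  rw [Finset.mul_sum]
  refine Finset.sum_congr rfl fun j hj => ?_
  rw [Finset.mul_sum, Finset.mul_sum]
  refine Finset.sum_congr rfl fun i hi => ?_
  rw [← Finset.sum_range_reflect (fun k => ((i + 1 : ℕ) : S) * algebraMap R S (lam j)
        * algebraMap R S (mu (r-k)) * t ^ (s-j-i-2) * u ^ (i+k)) (r+1), Finset.sum_mul]
  refine Finset.sum_congr rfl fun k hk => ?_
  simp only [Finset.mem_range] at hk
  rw [show r+1-1-k = r-k by omega, show r-(r-k) = k by omega,
    show i+(r-k) = (r-k)+i by omega, show s-j-i-2 = s-j-2-i by omega, pow_add]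
  ring

/-- Let `r, s ≥ 0`, `k_s(x) = Σ_{j=0}^{s} λ_j x^{s−j}` and
`k_r(x) = Σ_{j=0}^{r} μ_j x^{r−j}` be monic over a commutative ring, with formal
derivatives `k_s′, k_r′`, and `k_{s+r} = k_s·k_r`. Then in the polynomial ring in `t, u`:
`k_{s+r}(t) − k_{s+r}(u) − (t − u)(k_s′(u)k_r(u) + k_s(t)k_r′(t))
  = (t − u)² [ Σ_{j=0}^{s−2} Σ_{i=0}^{s−j−2} Σ_{k=0}^{r} (i+1) λ_j μ_{r−k} t^{s−j−i−2} u^{i+k}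
             − Σ_{j=0}^{r−2} Σ_{i=0}^{r−j−2} Σ_{k=0}^{s} (i+1) μ_j λ_{s−k} u^{r−j−i−2} t^{i+k} ]`. -/
theorem stmt13 (R : Type*) [CommRing R] (r s : ℕ)
    (lam mu : ℕ → R) (hl0 : lam 0 = 1) (hm0 : mu 0 = 1)
    (ks kr : Polynomial R)
    (hks : ks = ∑ j ∈ Finset.range (s+1), Polynomial.C (lam j) * Polynomial.X ^ (s - j))
    (hkr : kr = ∑ j ∈ Finset.range (r+1), Polynomial.C (mu j) * Polynomial.X ^ (r - j))
    (t u : MvPolynomial (Fin 2) R)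
    (ht : t = MvPolynomial.X 0) (hu : u = MvPolynomial.X 1) :
    Polynomial.aeval t (ks * kr) - Polynomial.aeval u (ks * kr)
      - (t - u) * (Polynomial.aeval u (Polynomial.derivative ks) * Polynomial.aeval u kr
          + Polynomial.aeval t ks * Polynomial.aeval t (Polynomial.derivative kr)) =
    (t - u) ^ 2 *
      ((∑ j ∈ Finset.range (s-1), ∑ i ∈ Finset.range (s-j-1), ∑ k ∈ Finset.range (r+1),
          ((i + 1 : ℕ) : MvPolynomial (Fin 2) R) * MvPolynomial.C (lam j)
            * MvPolynomial.C (mu (r-k)) * t ^ (s-j-i-2) * u ^ (i+k))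
      - (∑ j ∈ Finset.range (r-1), ∑ i ∈ Finset.range (r-j-1), ∑ k ∈ Finset.range (s+1),
          ((i + 1 : ℕ) : MvPolynomial (Fin 2) R) * MvPolynomial.C (mu j)
            * MvPolynomial.C (lam (s-k)) * u ^ (r-j-i-2) * t ^ (i+k))) := by
  have h1 := polykey13 t u s lam
  have h2 := polykey13 u t r mu
  rw [← hks] at h1
  rw [← hkr] at h2
  have hBu : Polynomial.aeval u kr
      = ∑ k ∈ Finset.range (r+1), algebraMap R (MvPolynomial (Fin 2) R) (mu k) * u ^ (r-k) := by
    rw [hkr]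
    simp [map_sum]
  have hAt : Polynomial.aeval t ks
      = ∑ k ∈ Finset.range (s+1), algebraMap R (MvPolynomial (Fin 2) R) (lam k) * t ^ (s-k) := by
    rw [hks]
    simp [map_sum]
  simp only [← MvPolynomial.algebraMap_eq]
  rw [triple13 t u s r lam mu, triple13 u t r s mu lam, ← hBu, ← hAt, map_mul, map_mul]
  linear_combination (Polynomial.aeval u kr) * h1 - (Polynomial.aeval t ks) * h2
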